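/- arXiv:2504.03885 — 4 statements merged into one kernel-verified Lean document; each statement's English description precedes it below -/
import Mathlib

section
/- The Minkowski sum of two constrained zonotopes Z₁ = ⟨G₁, c₁, A₁, b₁⟩ and Z₂ = ⟨G₂, c₂, A₂, b₂⟩ equals the constrained zonotope ⟨[G₁ G₂], c₁ + c₂, blkdiag(A₁, A₂), (b₁; b₂)⟩. -/
open Matrix Pointwise

def conZono {n g m : Type*} [Fintype g] [Fintype m]
    (G : Matrix n g ℝ) (c : n → ℝ) (A : Matrix m g ℝ) (b : m → ℝ) : Set (n → ℝ) :=
  {x | ∃ ξ : g → ℝ, A.mulVec ξ = b ∧ (∀ i, |ξ i| ≤ 1) ∧ x = G.mulVec ξ + c}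

/-- the Minkowski sum of two constrained zonotopes is the constrained
zonotope `⟨[G₁ G₂], c₁ + c₂, blkdiag(A₁, A₂), (b₁; b₂)⟩`. -/
theorem minkSum_conZono {n g₁ g₂ m₁ m₂ : Type*}
    [Fintype g₁] [Fintype g₂] [Fintype m₁] [Fintype m₂]
    (G₁ : Matrix n g₁ ℝ) (c₁ : n → ℝ) (A₁ : Matrix m₁ g₁ ℝ) (b₁ : m₁ → ℝ)
    (G₂ : Matrix n g₂ ℝ) (c₂ : n → ℝ) (A₂ : Matrix m₂ g₂ ℝ) (b₂ : m₂ → ℝ) :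
    conZono G₁ c₁ A₁ b₁ + conZono G₂ c₂ A₂ b₂
      = conZono (Matrix.fromCols G₁ G₂) (c₁ + c₂)
          (Matrix.fromBlocks A₁ 0 0 A₂) (Sum.elim b₁ b₂) := by
  ext x
  constructor
  · rw [Set.mem_add]
    rintro ⟨x₁, ⟨ξ₁, h₁, hb₁, rfl⟩, x₂, ⟨ξ₂, h₂, hb₂, rfl⟩, rfl⟩
    refine ⟨Sum.elim ξ₁ ξ₂, ?_, ?_, ?_⟩
    · ext i
      cases i with
      | inl i => simpa [fromBlocks_mulVec, Matrix.mulVec, dotProduct] using congrFun h₁ i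
      | inr i => simpa [fromBlocks_mulVec, Matrix.mulVec, dotProduct] using congrFun h₂ i
    · rintro (i | i)
      exacts [hb₁ i, hb₂ i]
    · rw [fromCols_mulVec_sumElim]
      abel
  · rintro ⟨ξ, h, hb, rfl⟩
    rw [Set.mem_add]
    refine ⟨G₁.mulVec (ξ ∘ Sum.inl) + c₁, ⟨ξ ∘ Sum.inl, ?_, fun i => hb _, rfl⟩,
      G₂.mulVec (ξ ∘ Sum.inr) + c₂, ⟨ξ ∘ Sum.inr, ?_, fun i => hb _, rfl⟩, ?_⟩
    · ext i
      have := congrFun h (Sum.inl i)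
      simpa [fromBlocks_mulVec, Matrix.mulVec, dotProduct] using this
    · ext i
      have := congrFun h (Sum.inr i)
      simpa [fromBlocks_mulVec, Matrix.mulVec, dotProduct] using this
    · have : ξ = Sum.elim (ξ ∘ Sum.inl) (ξ ∘ Sum.inr) := by ext (i|i) <;> rfl
      rw [this, fromCols_mulVec_sumElim]
      simp only [Sum.elim_comp_inl, Sum.elim_comp_inr]
      abel
end

section
/- The generalized intersection Z₁ ∩_R Z₂ = {z ∈ Z₁ | Rz ∈ Z₂} of constrained zonotopes Z₁ = ⟨G₁, c₁, A₁, b₁⟩ and Z₂ = ⟨G₂, c₂, A₂, b₂⟩ equals the constrained zonotope ⟨[G₁ 0], c₁, [[A₁, 0],[0, A₂],[RG₁, −G₂]], (b₁; b₂; c₂ − Rc₁)⟩. -/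
open Matrix

/-- the generalized intersection `Z₁ ∩_R Z₂ = {z ∈ Z₁ | Rz ∈ Z₂}` equals the
constrained zonotope `⟨[G₁ 0], c₁, [[A₁,0],[0,A₂],[RG₁,−G₂]], (b₁; b₂; c₂ − Rc₁)⟩`. -/
theorem genIntersection_conZono {n₁ n₂ g₁ g₂ m₁ m₂ : Type*}
    [Fintype n₁] [Fintype n₂] [Fintype g₁] [Fintype g₂] [Fintype m₁] [Fintype m₂]
    (G₁ : Matrix n₁ g₁ ℝ) (c₁ : n₁ → ℝ) (A₁ : Matrix m₁ g₁ ℝ) (b₁ : m₁ → ℝ)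
    (G₂ : Matrix n₂ g₂ ℝ) (c₂ : n₂ → ℝ) (A₂ : Matrix m₂ g₂ ℝ) (b₂ : m₂ → ℝ)
    (R : Matrix n₂ n₁ ℝ) :
    {z ∈ conZono G₁ c₁ A₁ b₁ | R.mulVec z ∈ conZono G₂ c₂ A₂ b₂}
      = conZono (Matrix.fromCols G₁ 0) c₁
          (Matrix.fromRows (Matrix.fromBlocks A₁ 0 0 A₂)
            (Matrix.fromCols (R * G₁) (-G₂)))
          (Sum.elim (Sum.elim b₁ b₂) (c₂ - R.mulVec c₁)) := by
  ext z
  constructor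
  · rintro ⟨⟨ξ₁, h1, hb1, rfl⟩, ξ₂, h2, hb2, hz2⟩
    refine ⟨Sum.elim ξ₁ ξ₂, ?_, ?_, ?_⟩
    · rw [fromRows_mulVec, fromBlocks_mulVec]
      simp only [Sum.elim_comp_inl, Sum.elim_comp_inr, Matrix.zero_mulVec,
        add_zero, zero_add, h1, h2, fromCols_mulVec_sumElim, neg_mulVec,
        ← mulVec_mulVec]
      rw [Matrix.mulVec_add] at hz2
      have hx : R *ᵥ (G₁ *ᵥ ξ₁) + -(G₂ *ᵥ ξ₂) = c₂ - R *ᵥ c₁ := by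
        funext i
        have := congrFun hz2 i
        simp only [Pi.add_apply, Pi.neg_apply, Pi.sub_apply] at this ⊢
        linarith
      rw [hx]
    · rintro (i | i) <;> [exact hb1 i; exact hb2 i]
    · rw [fromCols_mulVec_sumElim, Matrix.zero_mulVec, add_zero]
  · rintro ⟨ξ, hA, hb, rfl⟩
    obtain ⟨ξ₁, ξ₂, rfl⟩ : ∃ a b, ξ = Sum.elim a b :=
      ⟨_, _, (Sum.elim_comp_inl_inr ξ).symm⟩
    rw [fromRows_mulVec, fromBlocks_mulVec] at hA
    simp only [Matrix.zero_mulVec, add_zero, zero_add, fromCols_mulVec_sumElim,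
      neg_mulVec, ← mulVec_mulVec] at hA
    have h1 : A₁ *ᵥ (ξ₁) = b₁ := by
      funext i; exact congrFun hA (Sum.inl (Sum.inl i))
    have h2 : A₂ *ᵥ (ξ₂) = b₂ := by
      funext i; exact congrFun hA (Sum.inl (Sum.inr i))
    have h3 : R *ᵥ (G₁ *ᵥ (ξ₁)) + -(G₂ *ᵥ (ξ₂)) = c₂ - R *ᵥ c₁ := by
      funext i; exact congrFun hA (Sum.inr i)
    rw [fromCols_mulVec_sumElim, Matrix.zero_mulVec, add_zero]
    refine ⟨⟨ξ₁, h1, fun i => hb (Sum.inl i), rfl⟩,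
      ξ₂, h2, fun i => hb (Sum.inr i), ?_⟩
    funext i
    have := congrFun h3 i
    simp only [Matrix.mulVec_add, Pi.add_apply, Pi.neg_apply, Pi.sub_apply] at this ⊢
    linarith
end

section
/- If P̃ is symmetric positive semi-definite, ρ > 0, and A has full row rank, then the KKT matrix M = [[P̃ + ρI, Aᵀ],[A, 0]] is nonsingular. -/
open Matrix

lemma transpose_mulVec_inj {n m : ℕ} (A : Matrix (Fin m) (Fin n) ℝ)
    (hrank : A.rank = m) {y : Fin m → ℝ} (hy : Aᵀ *ᵥ y = 0) : y = 0 := by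
  have hr : Aᵀ.rank = m := by rw [Matrix.rank_transpose]; exact hrank
  have h := LinearMap.finrank_range_add_finrank_ker (Aᵀ.mulVecLin)
  have hdom : Module.finrank ℝ (Fin m → ℝ) = m := by simp
  rw [hdom] at h
  have hker : Module.finrank ℝ (LinearMap.ker Aᵀ.mulVecLin) = 0 := by
    have : Aᵀ.rank = Module.finrank ℝ (LinearMap.range Aᵀ.mulVecLin) := rfl
    omega
  have : LinearMap.ker Aᵀ.mulVecLin = ⊥ := Submodule.finrank_eq_zero.mp hker
  have hmem : y ∈ LinearMap.ker Aᵀ.mulVecLin := by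
    exact hy
  rw [this] at hmem
  simpa using hmem

/-- if `P̃` is symmetric positive semi-definite, `ρ > 0`, and `A` has full
row rank, then the KKT matrix `M = [[P̃ + ρI, Aᵀ],[A, 0]]` is nonsingular. -/
theorem kkt_matrix_nonsingular {n m : ℕ}
    (Pt : Matrix (Fin n) (Fin n) ℝ) (hsymm : Pt.IsSymm)
    (hpsd : ∀ ξ : Fin n → ℝ, 0 ≤ ξ ⬝ᵥ Pt.mulVec ξ)
    (ρ : ℝ) (hρ : 0 < ρ)
    (A : Matrix (Fin m) (Fin n) ℝ) (hrank : A.rank = m) :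
    IsUnit (Matrix.fromBlocks (Pt + ρ • (1 : Matrix (Fin n) (Fin n) ℝ)) Aᵀ A
      (0 : Matrix (Fin m) (Fin m) ℝ)) := by
  rw [Matrix.isUnit_iff_isUnit_det, isUnit_iff_ne_zero]
  intro hdet
  obtain ⟨v, hv, hMv⟩ := (Matrix.exists_mulVec_eq_zero_iff).mpr hdet
  set x : Fin n → ℝ := v ∘ Sum.inl with hx
  set y : Fin m → ℝ := v ∘ Sum.inr with hy
  have hvel : v = Sum.elim x y := by
    funext i; cases i <;> rfl
  rw [hvel, Matrix.fromBlocks_mulVec] at hMv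
  have h1 : (Pt + ρ • (1 : Matrix (Fin n) (Fin n) ℝ)) *ᵥ x + Aᵀ *ᵥ y = 0 := by
    funext i
    simpa using congrFun hMv (Sum.inl i)
  have h2 : A *ᵥ x = 0 := by
    funext i
    simpa using congrFun hMv (Sum.inr i)
  -- dot with x
  have hdot : x ⬝ᵥ ((Pt + ρ • (1 : Matrix (Fin n) (Fin n) ℝ)) *ᵥ x) + x ⬝ᵥ (Aᵀ *ᵥ y) = 0 := by
    rw [← dotProduct_add, h1, dotProduct_zero]
  have hAterm : x ⬝ᵥ (Aᵀ *ᵥ y) = 0 := by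
    rw [Matrix.dotProduct_mulVec, Matrix.vecMul_transpose, h2, zero_dotProduct]
  have hexp : x ⬝ᵥ ((Pt + ρ • (1 : Matrix (Fin n) (Fin n) ℝ)) *ᵥ x)
      = x ⬝ᵥ (Pt *ᵥ x) + ρ * (x ⬝ᵥ x) := by
    rw [Matrix.add_mulVec, dotProduct_add]
    congr 1
    rw [Matrix.smul_mulVec, Matrix.one_mulVec, dotProduct_smul]
    rfl
  rw [hAterm, add_zero, hexp] at hdot
  have hxx : x ⬝ᵥ x = 0 := by
    have h0 := hpsd x
    have hnn : (0:ℝ) ≤ x ⬝ᵥ x := Finset.sum_nonneg fun i _ => mul_self_nonneg (x i)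
    nlinarith
  have hx0 : x = 0 := (dotProduct_self_eq_zero).mp hxx
  rw [hx0] at h1
  simp only [Matrix.mulVec_zero, zero_add] at h1
  have hy0 : y = 0 := transpose_mulVec_inj A hrank h1
  apply hv
  rw [hvel, hx0, hy0]
  funext i; cases i <;> rfl
end

section
/- SVSE sparse form equivalence: for the system x_{k+1} = Ax_k + Bu_k + w_k with measurement y = Cx + v, the set [0 0 I]((X_k × W × (S ∩_C (y_{k+1} ⊕ (−V)))) ∩_{[A I −I]} {−Bu_k}) equals ((A X_k ⊕ Bu_k ⊕ W) ∩_C (y_{k+1} ⊕ (−V))) ∩ S, where ⊕ with a vector denotes translation. -/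
open Matrix

/-- SVSE sparse form equivalence. For `x_{k+1} = Ax_k + Bu_k + w_k`,
`y = Cx + v`, the set
`[0 0 I]((X_k × W × (S ∩_C (y_{k+1} ⊕ (−V)))) ∩_{[A I −I]} {−Bu_k})` equals
`((A X_k ⊕ Bu_k ⊕ W) ∩_C (y_{k+1} ⊕ (−V))) ∩ S`. -/
theorem svse_sparse_form_equiv {nx nu ny : ℕ}
    (A : Matrix (Fin nx) (Fin nx) ℝ) (B : Matrix (Fin nx) (Fin nu) ℝ)
    (C : Matrix (Fin ny) (Fin nx) ℝ)
    (Xk W : Set (Fin nx → ℝ)) (V : Set (Fin ny → ℝ)) (S : Set (Fin nx → ℝ))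
    (uk : Fin nu → ℝ) (yk1 : Fin ny → ℝ) :
    {s | ∃ x ∈ Xk, ∃ w ∈ W,
        (s ∈ S ∧ C.mulVec s ∈ {p | ∃ v ∈ V, p = yk1 - v}) ∧
        A.mulVec x + w - s = -B.mulVec uk}
      = {z | (∃ x ∈ Xk, ∃ w ∈ W, z = A.mulVec x + B.mulVec uk + w) ∧
          C.mulVec z ∈ {p | ∃ v ∈ V, p = yk1 - v}} ∩ S := by
  ext s
  constructor
  · rintro ⟨x, hx, w, hw, ⟨hS, hC⟩, heq⟩
    refine ⟨⟨⟨x, hx, w, hw, ?_⟩, hC⟩, hS⟩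
    have : s = A.mulVec x + w + B.mulVec uk := by
      have := congrArg (· + s + B.mulVec uk) heq
      simpa [sub_add_cancel] using this.symm
    rw [this]; abel
  · rintro ⟨⟨⟨x, hx, w, hw, hz⟩, hC⟩, hS⟩
    exact ⟨x, hx, w, hw, ⟨hS, hC⟩, by rw [hz]; abel⟩
end
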